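/- Let E be a real Banach space, let k > 0, t ∈ ℝ, and let u : ℝ → E be four times continuously differentiable on [t−k, t+k]. Then ‖(u(t+k) − 2u(t) + u(t−k))/k² − (u''(t+k) + 2u''(t) + u''(t−k))/4‖² ≤ (41/2520) k³ ∫_{t−k}^{t+k} ‖u''''(s)‖² ds. -/

import Mathlib

open Set intervalIntegral MeasureTheory

/-- Cauchy–Schwarz inequality for interval integrals of continuous functions. -/
lemma cs_interval {c d : ℝ} (hcd : c ≤ d) {f g : ℝ → ℝ}
    (hf : ContinuousOn f (Set.Icc c d)) (hg : ContinuousOn g (Set.Icc c d)) :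
    ∫ s in c..d, f s * g s ≤
      Real.sqrt (∫ s in c..d, f s ^ 2) * Real.sqrt (∫ s in c..d, g s ^ 2) := by
  have huIcc : Set.uIcc c d = Set.Icc c d := Set.uIcc_of_le hcd
  have hff : IntervalIntegrable (fun s => f s ^ 2) MeasureTheory.volume c d := by
    apply ContinuousOn.intervalIntegrable; rw [huIcc]; exact (hf.pow 2)
  have hgg : IntervalIntegrable (fun s => g s ^ 2) MeasureTheory.volume c d := by
    apply ContinuousOn.intervalIntegrable; rw [huIcc]; exact (hg.pow 2)
  have hfg : IntervalIntegrable (fun s => f s * g s) MeasureTheory.volume c d := by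
    apply ContinuousOn.intervalIntegrable; rw [huIcc]; exact hf.mul hg
  set A := ∫ s in c..d, g s ^ 2 with hA
  set B := ∫ s in c..d, f s * g s with hB
  set C := ∫ s in c..d, f s ^ 2 with hC
  have hquad : ∀ x : ℝ, 0 ≤ A * (x * x) + (2 * B) * x + C := by
    intro x
    have h1 : (fun s => (x * g s + f s) ^ 2)
        = fun s => (x * x) * g s ^ 2 + (2 * x) * (f s * g s) + f s ^ 2 := by
      funext s; ring
    have h2 : (0:ℝ) ≤ ∫ s in c..d, (x * g s + f s) ^ 2 :=
      intervalIntegral.integral_nonneg hcd (fun s _ => sq_nonneg _)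
    rw [h1] at h2
    rw [intervalIntegral.integral_add (((hgg.const_mul _).add (hfg.const_mul _)))
        hff, intervalIntegral.integral_add (hgg.const_mul _) (hfg.const_mul _),
      intervalIntegral.integral_const_mul, intervalIntegral.integral_const_mul] at h2
    nlinarith [h2]
  have hdisc : discrim A (2 * B) C ≤ 0 := discrim_le_zero hquad
  rw [discrim] at hdisc
  have hBsq : B ^ 2 ≤ C * A := by nlinarith
  have hC0 : 0 ≤ C := intervalIntegral.integral_nonneg hcd (fun s _ => sq_nonneg _)
  calc B ≤ |B| := le_abs_self B
    _ = Real.sqrt (B ^ 2) := (Real.sqrt_sq_eq_abs B).symm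
    _ ≤ Real.sqrt (C * A) := Real.sqrt_le_sqrt hBsq
    _ = Real.sqrt C * Real.sqrt A := Real.sqrt_mul hC0 A

set_option maxHeartbeats 1000000 in
/-- Bound on the truncation error `rⁿ` of the implicit scheme. -/
theorem truncation_error_implicit_bound
    {E : Type*} [NormedAddCommGroup E] [NormedSpace ℝ E] [CompleteSpace E]
    (k t : ℝ) (hk : 0 < k) (u u' u'' u''' u'''' : ℝ → E)
    (hu' : ∀ s ∈ Set.Icc (t - k) (t + k),
      HasDerivWithinAt u (u' s) (Set.Icc (t - k) (t + k)) s)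
    (hu'' : ∀ s ∈ Set.Icc (t - k) (t + k),
      HasDerivWithinAt u' (u'' s) (Set.Icc (t - k) (t + k)) s)
    (hu''' : ∀ s ∈ Set.Icc (t - k) (t + k),
      HasDerivWithinAt u'' (u''' s) (Set.Icc (t - k) (t + k)) s)
    (hu'''' : ∀ s ∈ Set.Icc (t - k) (t + k),
      HasDerivWithinAt u''' (u'''' s) (Set.Icc (t - k) (t + k)) s)
    (hcont : ContinuousOn u'''' (Set.Icc (t - k) (t + k))) :
    ‖(k ^ 2)⁻¹ • (u (t + k) - (2 : ℝ) • u t + u (t - k))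
        - (1 / 4 : ℝ) • (u'' (t + k) + (2 : ℝ) • u'' t + u'' (t - k))‖ ^ 2
      ≤ (41 / 2520) * k ^ 3 * ∫ s in (t - k)..(t + k), ‖u'''' s‖ ^ 2 := by
  have hk0 : k ≠ 0 := ne_of_gt hk
  set a := t - k with ha
  set b := t + k with hb
  have hat : a ≤ t := by simp [ha]; positivity
  have htb : t ≤ b := by simp [hb]; positivity
  have hab : a ≤ b := le_trans hat htb
  have hD1 : ∀ x ∈ Set.Ioo a b, HasDerivAt u (u' x) x := fun x hx =>
    (hu' x (Set.mem_Icc_of_Ioo hx)).hasDerivAt (Icc_mem_nhds hx.1 hx.2)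
  have hD2 : ∀ x ∈ Set.Ioo a b, HasDerivAt u' (u'' x) x := fun x hx =>
    (hu'' x (Set.mem_Icc_of_Ioo hx)).hasDerivAt (Icc_mem_nhds hx.1 hx.2)
  have hD3 : ∀ x ∈ Set.Ioo a b, HasDerivAt u'' (u''' x) x := fun x hx =>
    (hu''' x (Set.mem_Icc_of_Ioo hx)).hasDerivAt (Icc_mem_nhds hx.1 hx.2)
  have hD4 : ∀ x ∈ Set.Ioo a b, HasDerivAt u''' (u'''' x) x := fun x hx =>
    (hu'''' x (Set.mem_Icc_of_Ioo hx)).hasDerivAt (Icc_mem_nhds hx.1 hx.2)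
  have hCu : ContinuousOn u (Set.Icc a b) := fun x hx => (hu' x hx).continuousWithinAt
  have hCu' : ContinuousOn u' (Set.Icc a b) := fun x hx => (hu'' x hx).continuousWithinAt
  have hCu'' : ContinuousOn u'' (Set.Icc a b) := fun x hx => (hu''' x hx).continuousWithinAt
  have hCu''' : ContinuousOn u''' (Set.Icc a b) := fun x hx => (hu'''' x hx).continuousWithinAt
  have hsubR : Set.Icc t b ⊆ Set.Icc a b := Set.Icc_subset_Icc hat le_rfl
  have hsubL : Set.Icc a t ⊆ Set.Icc a b := Set.Icc_subset_Icc le_rfl htb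
  -- integrability facts
  have hi1 : IntervalIntegrable (fun s => ((b - s)^3/6) • u'''' s) volume t b := by
    apply ContinuousOn.intervalIntegrable
    rw [Set.uIcc_of_le htb]
    exact ContinuousOn.smul (by fun_prop) (hcont.mono hsubR)
  have hi2 : IntervalIntegrable (fun s => ((s - a)^3/6) • u'''' s) volume a t := by
    apply ContinuousOn.intervalIntegrable
    rw [Set.uIcc_of_le hat]
    exact ContinuousOn.smul (by fun_prop) (hcont.mono hsubL)
  have hi3 : IntervalIntegrable (fun s => (b - s) • u'''' s) volume t b := by
    apply ContinuousOn.intervalIntegrable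
    rw [Set.uIcc_of_le htb]
    exact ContinuousOn.smul (by fun_prop) (hcont.mono hsubR)
  have hi4 : IntervalIntegrable (fun s => (s - a) • u'''' s) volume a t := by
    apply ContinuousOn.intervalIntegrable
    rw [Set.uIcc_of_le hat]
    exact ContinuousOn.smul (by fun_prop) (hcont.mono hsubL)
  -- Taylor identities via FTC
  have T1 : ∫ s in t..b, ((b - s)^3/6) • u'''' s
      = u b - u t - k • u' t - (k^2/2) • u'' t - (k^3/6) • u''' t := by
    have key := intervalIntegral.integral_eq_sub_of_hasDeriv_right_of_le htb
      (f := fun s => u s + (b - s) • u' s + ((b-s)^2/2) • u'' s + ((b-s)^3/6) • u''' s)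
      (f' := fun s => ((b - s)^3/6) • u'''' s)
      (by
        apply ContinuousOn.add
        apply ContinuousOn.add
        apply ContinuousOn.add
        · exact hCu.mono hsubR
        · exact ContinuousOn.smul (by fun_prop) (hCu'.mono hsubR)
        · exact ContinuousOn.smul (by fun_prop) (hCu''.mono hsubR)
        · exact ContinuousOn.smul (by fun_prop) (hCu'''.mono hsubR))
      (by
        intro x hx
        have hx' : x ∈ Set.Ioo a b := ⟨lt_of_le_of_lt hat hx.1, hx.2⟩
        have s1 : HasDerivAt (fun s => b - s) (-1) x := by
          simpa using (hasDerivAt_id x).const_sub b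
        have s2 : HasDerivAt (fun s : ℝ => (b-s)^2/2) (-(b-x)) x := by
          have := (s1.pow 2).div_const 2; convert this using 1; rfl; rfl; rfl; push_cast; ring
        have s3 : HasDerivAt (fun s : ℝ => (b-s)^3/6) (-(b-x)^2/2) x := by
          have := (s1.pow 3).div_const 6; convert this using 1; rfl; rfl; rfl; push_cast; ring
        have hH := (((hD1 x hx').add (s1.smul (hD2 x hx'))).add
            (s2.smul (hD3 x hx'))).add (s3.smul (hD4 x hx'))
        refine HasDerivAt.hasDerivWithinAt ?_
        convert hH using 1
        · rfl
        module)
      hi1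
    rw [key]
    have e1 : b - b = 0 := sub_self b
    have e2 : b - t = k := by simp [hb]
    rw [e1, e2]
    norm_num
    module
  have T2 : ∫ s in a..t, ((s - a)^3/6) • u'''' s
      = u a - u t + k • u' t - (k^2/2) • u'' t + (k^3/6) • u''' t := by
    have key := intervalIntegral.integral_eq_sub_of_hasDeriv_right_of_le hat
      (f := fun s => ((s-a)^3/6) • u''' s - ((s-a)^2/2) • u'' s + (s - a) • u' s - u s)
      (f' := fun s => ((s - a)^3/6) • u'''' s)
      (by
        apply ContinuousOn.sub
        apply ContinuousOn.add
        apply ContinuousOn.sub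
        · exact ContinuousOn.smul (by fun_prop) (hCu'''.mono hsubL)
        · exact ContinuousOn.smul (by fun_prop) (hCu''.mono hsubL)
        · exact ContinuousOn.smul (by fun_prop) (hCu'.mono hsubL)
        · exact hCu.mono hsubL)
      (by
        intro x hx
        have hx' : x ∈ Set.Ioo a b := ⟨hx.1, lt_of_lt_of_le hx.2 htb⟩
        have s1 : HasDerivAt (fun s : ℝ => s - a) 1 x := (hasDerivAt_id x).sub_const a
        have s2 : HasDerivAt (fun s : ℝ => (s-a)^2/2) (x - a) x := by
          have := (s1.pow 2).div_const 2; convert this using 1; rfl; rfl; rfl; push_cast; ring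
        have s3 : HasDerivAt (fun s : ℝ => (s-a)^3/6) ((x-a)^2/2) x := by
          have := (s1.pow 3).div_const 6; convert this using 1; rfl; rfl; rfl; push_cast; ring
        have hH := (((s3.smul (hD4 x hx')).sub (s2.smul (hD3 x hx'))).add
            (s1.smul (hD2 x hx'))).sub (hD1 x hx')
        refine HasDerivAt.hasDerivWithinAt ?_
        convert hH using 1
        · rfl
        module)
      hi2
    rw [key]
    have e1 : a - a = 0 := sub_self a
    have e2 : t - a = k := by simp [ha]
    rw [e1, e2]
    norm_num
    module
  have T3 : ∫ s in t..b, (b - s) • u'''' s = u'' b - u'' t - k • u''' t := by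
    have key := intervalIntegral.integral_eq_sub_of_hasDeriv_right_of_le htb
      (f := fun s => u'' s + (b - s) • u''' s)
      (f' := fun s => (b - s) • u'''' s)
      (by
        apply ContinuousOn.add
        · exact hCu''.mono hsubR
        · exact ContinuousOn.smul (by fun_prop) (hCu'''.mono hsubR))
      (by
        intro x hx
        have hx' : x ∈ Set.Ioo a b := ⟨lt_of_le_of_lt hat hx.1, hx.2⟩
        have s1 : HasDerivAt (fun s => b - s) (-1) x := by
          simpa using (hasDerivAt_id x).const_sub b
        have hH := (hD3 x hx').add (s1.smul (hD4 x hx'))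
        refine HasDerivAt.hasDerivWithinAt ?_
        convert hH using 1
        · rfl
        module)
      hi3
    rw [key]
    have e1 : b - b = 0 := sub_self b
    have e2 : b - t = k := by simp [hb]
    rw [e1, e2]
    norm_num
    abel
  have T4 : ∫ s in a..t, (s - a) • u'''' s = u'' a - u'' t + k • u''' t := by
    have key := intervalIntegral.integral_eq_sub_of_hasDeriv_right_of_le hat
      (f := fun s => (s - a) • u''' s - u'' s)
      (f' := fun s => (s - a) • u'''' s)
      (by
        apply ContinuousOn.sub
        · exact ContinuousOn.smul (by fun_prop) (hCu'''.mono hsubL)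
        · exact hCu''.mono hsubL)
      (by
        intro x hx
        have hx' : x ∈ Set.Ioo a b := ⟨hx.1, lt_of_lt_of_le hx.2 htb⟩
        have s1 : HasDerivAt (fun s : ℝ => s - a) 1 x := (hasDerivAt_id x).sub_const a
        have hH := (s1.smul (hD4 x hx')).sub (hD3 x hx')
        refine HasDerivAt.hasDerivWithinAt ?_
        convert hH using 1
        · rfl
        module)
      hi4
    rw [key]
    have e1 : a - a = 0 := sub_self a
    have e2 : t - a = k := by simp [ha]
    rw [e1, e2]
    norm_num
    abel
  -- kernel representation
  have hrepR : ∫ s in t..b, ((b-s)^3/(6*k^2) - (b-s)/4) • u'''' s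
      = (k^2)⁻¹ • (∫ s in t..b, ((b - s)^3/6) • u'''' s)
        - (1/4 : ℝ) • (∫ s in t..b, (b - s) • u'''' s) := by
    have hi1' : IntervalIntegrable (fun s => (k^2)⁻¹ • (((b - s)^3/6) • u'''' s)) volume t b :=
      hi1.smul _
    have hi3' : IntervalIntegrable (fun s => (1/4 : ℝ) • ((b - s) • u'''' s)) volume t b :=
      hi3.smul _
    have e : (fun s => ((b-s)^3/(6*k^2) - (b-s)/4) • u'''' s)
        = fun s => (k^2)⁻¹ • (((b - s)^3/6) • u'''' s) - (1/4 : ℝ) • ((b - s) • u'''' s) := by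
      funext s
      match_scalars
      field_simp
    rw [e, intervalIntegral.integral_sub hi1' hi3', intervalIntegral.integral_smul,
      intervalIntegral.integral_smul]
  have hrepL : ∫ s in a..t, ((s-a)^3/(6*k^2) - (s-a)/4) • u'''' s
      = (k^2)⁻¹ • (∫ s in a..t, ((s - a)^3/6) • u'''' s)
        - (1/4 : ℝ) • (∫ s in a..t, (s - a) • u'''' s) := by
    have hi2' : IntervalIntegrable (fun s => (k^2)⁻¹ • (((s - a)^3/6) • u'''' s)) volume a t :=
      hi2.smul _
    have hi4' : IntervalIntegrable (fun s => (1/4 : ℝ) • ((s - a) • u'''' s)) volume a t :=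
      hi4.smul _
    have e : (fun s => ((s-a)^3/(6*k^2) - (s-a)/4) • u'''' s)
        = fun s => (k^2)⁻¹ • (((s - a)^3/6) • u'''' s) - (1/4 : ℝ) • ((s - a) • u'''' s) := by
      funext s
      match_scalars
      field_simp
    rw [e, intervalIntegral.integral_sub hi2' hi4', intervalIntegral.integral_smul,
      intervalIntegral.integral_smul]
  have hr : (k ^ 2)⁻¹ • (u b - (2 : ℝ) • u t + u a)
        - (1 / 4 : ℝ) • (u'' b + (2 : ℝ) • u'' t + u'' a)
      = (∫ s in a..t, ((s-a)^3/(6*k^2) - (s-a)/4) • u'''' s)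
        + (∫ s in t..b, ((b-s)^3/(6*k^2) - (b-s)/4) • u'''' s) := by
    rw [hrepL, hrepR, T1, T2, T3, T4]
    match_scalars <;> field_simp <;> ring
  -- kernel L² integrals
  have hK1 : (∫ s in a..t, ((s-a)^3/(6*k^2) - (s-a)/4)^2) = 41/5040 * k^3 := by
    have h := intervalIntegral.integral_comp_sub_right
      (a := a) (b := t) (fun x => (x^3/(6*k^2) - x/4)^2) a
    beta_reduce at h
    rw [show a - a = (0:ℝ) from sub_self a, show t - a = k by simp [ha]] at h
    rw [h]
    have expand : ∀ x : ℝ, (x^3/(6*k^2) - x/4)^2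
        = (36*k^4)⁻¹ * x^6 - (12*k^2)⁻¹ * x^4 + (16:ℝ)⁻¹ * x^2 := by
      intro x; field_simp; ring
    rw [intervalIntegral.integral_congr (g := fun x =>
        (36*k^4)⁻¹ * x^6 - (12*k^2)⁻¹ * x^4 + (16:ℝ)⁻¹ * x^2) (fun x _ => expand x)]
    rw [intervalIntegral.integral_add (by apply Continuous.intervalIntegrable; fun_prop)
        (by apply Continuous.intervalIntegrable; fun_prop),
      intervalIntegral.integral_sub (by apply Continuous.intervalIntegrable; fun_prop)
        (by apply Continuous.intervalIntegrable; fun_prop),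
      intervalIntegral.integral_const_mul, intervalIntegral.integral_const_mul,
      intervalIntegral.integral_const_mul, integral_pow, integral_pow, integral_pow]
    field_simp
    ring
  have hK2 : (∫ s in t..b, ((b-s)^3/(6*k^2) - (b-s)/4)^2) = 41/5040 * k^3 := by
    have h := intervalIntegral.integral_comp_sub_left
      (a := t) (b := b) (fun x => (x^3/(6*k^2) - x/4)^2) b
    beta_reduce at h
    rw [show b - b = (0:ℝ) from sub_self b, show b - t = k by simp [hb]] at h
    rw [h]
    have expand : ∀ x : ℝ, (x^3/(6*k^2) - x/4)^2
        = (36*k^4)⁻¹ * x^6 - (12*k^2)⁻¹ * x^4 + (16:ℝ)⁻¹ * x^2 := by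
      intro x; field_simp; ring
    rw [intervalIntegral.integral_congr (g := fun x =>
        (36*k^4)⁻¹ * x^6 - (12*k^2)⁻¹ * x^4 + (16:ℝ)⁻¹ * x^2) (fun x _ => expand x)]
    rw [intervalIntegral.integral_add (by apply Continuous.intervalIntegrable; fun_prop)
        (by apply Continuous.intervalIntegrable; fun_prop),
      intervalIntegral.integral_sub (by apply Continuous.intervalIntegrable; fun_prop)
        (by apply Continuous.intervalIntegrable; fun_prop),
      intervalIntegral.integral_const_mul, intervalIntegral.integral_const_mul,
      intervalIntegral.integral_const_mul, integral_pow, integral_pow, integral_pow]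
    field_simp
    ring
  -- Cauchy–Schwarz estimates
  set X := ∫ s in a..t, ‖u'''' s‖^2 with hX
  set Y := ∫ s in t..b, ‖u'''' s‖^2 with hY
  have hX0 : 0 ≤ X := intervalIntegral.integral_nonneg hat (fun s _ => sq_nonneg _)
  have hY0 : 0 ≤ Y := intervalIntegral.integral_nonneg htb (fun s _ => sq_nonneg _)
  have hCSL : ‖∫ s in a..t, ((s-a)^3/(6*k^2) - (s-a)/4) • u'''' s‖
      ≤ Real.sqrt (41/5040 * k^3) * Real.sqrt X := by
    calc ‖∫ s in a..t, ((s-a)^3/(6*k^2) - (s-a)/4) • u'''' s‖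
        ≤ ∫ s in a..t, ‖((s-a)^3/(6*k^2) - (s-a)/4) • u'''' s‖ :=
          intervalIntegral.norm_integral_le_integral_norm hat
      _ = ∫ s in a..t, |((s-a)^3/(6*k^2) - (s-a)/4)| * ‖u'''' s‖ := by
          apply intervalIntegral.integral_congr
          intro s hs; simp [norm_smul]
      _ ≤ Real.sqrt (∫ s in a..t, |((s-a)^3/(6*k^2) - (s-a)/4)|^2)
            * Real.sqrt (∫ s in a..t, ‖u'''' s‖^2) := by
          apply cs_interval hat
          · fun_prop
          · exact (hcont.mono hsubL).norm
      _ = Real.sqrt (41/5040 * k^3) * Real.sqrt X := by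
          rw [hX]
          congr 1
          rw [← hK1]
          congr 1
          apply intervalIntegral.integral_congr
          intro s hs; simp [sq_abs]
  have hCSR : ‖∫ s in t..b, ((b-s)^3/(6*k^2) - (b-s)/4) • u'''' s‖
      ≤ Real.sqrt (41/5040 * k^3) * Real.sqrt Y := by
    calc ‖∫ s in t..b, ((b-s)^3/(6*k^2) - (b-s)/4) • u'''' s‖
        ≤ ∫ s in t..b, ‖((b-s)^3/(6*k^2) - (b-s)/4) • u'''' s‖ :=
          intervalIntegral.norm_integral_le_integral_norm htb
      _ = ∫ s in t..b, |((b-s)^3/(6*k^2) - (b-s)/4)| * ‖u'''' s‖ := by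
          apply intervalIntegral.integral_congr
          intro s hs; simp [norm_smul]
      _ ≤ Real.sqrt (∫ s in t..b, |((b-s)^3/(6*k^2) - (b-s)/4)|^2)
            * Real.sqrt (∫ s in t..b, ‖u'''' s‖^2) := by
          apply cs_interval htb
          · fun_prop
          · exact (hcont.mono hsubR).norm
      _ = Real.sqrt (41/5040 * k^3) * Real.sqrt Y := by
          rw [hY]
          congr 1
          rw [← hK2]
          congr 1
          apply intervalIntegral.integral_congr
          intro s hs; simp [sq_abs]
  -- assemble
  have hsplit : (∫ s in a..b, ‖u'''' s‖^2) = X + Y := by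
    rw [hX, hY]
    rw [← intervalIntegral.integral_add_adjacent_intervals
      (a := a) (b := t) (c := b) (f := fun s => ‖u'''' s‖^2)
      (by apply ContinuousOn.intervalIntegrable; rw [Set.uIcc_of_le hat]
          exact ((hcont.mono hsubL).norm.pow 2))
      (by apply ContinuousOn.intervalIntegrable; rw [Set.uIcc_of_le htb]
          exact ((hcont.mono hsubR).norm.pow 2))]
  have hnorm : ‖(k ^ 2)⁻¹ • (u b - (2 : ℝ) • u t + u a)
        - (1 / 4 : ℝ) • (u'' b + (2 : ℝ) • u'' t + u'' a)‖
      ≤ Real.sqrt (41/5040 * k^3) * (Real.sqrt X + Real.sqrt Y) := by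
    rw [hr]
    calc ‖(∫ s in a..t, ((s-a)^3/(6*k^2) - (s-a)/4) • u'''' s)
          + (∫ s in t..b, ((b-s)^3/(6*k^2) - (b-s)/4) • u'''' s)‖
        ≤ ‖∫ s in a..t, ((s-a)^3/(6*k^2) - (s-a)/4) • u'''' s‖
          + ‖∫ s in t..b, ((b-s)^3/(6*k^2) - (b-s)/4) • u'''' s‖ := norm_add_le _ _
      _ ≤ Real.sqrt (41/5040 * k^3) * Real.sqrt X
          + Real.sqrt (41/5040 * k^3) * Real.sqrt Y := add_le_add hCSL hCSR
      _ = Real.sqrt (41/5040 * k^3) * (Real.sqrt X + Real.sqrt Y) := by ring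
  rw [hsplit]
  have hC0 : (0:ℝ) ≤ 41/5040 * k^3 := by positivity
  have hsq := pow_le_pow_left₀ (norm_nonneg _) hnorm 2
  refine le_trans hsq ?_
  have hXY : (Real.sqrt X + Real.sqrt Y)^2 ≤ 2 * (X + Y) := by
    have h1 : Real.sqrt X ^ 2 = X := Real.sq_sqrt hX0
    have h2 : Real.sqrt Y ^ 2 = Y := Real.sq_sqrt hY0
    nlinarith [sq_nonneg (Real.sqrt X - Real.sqrt Y)]
  have hCsq : (Real.sqrt (41/5040 * k^3))^2 = 41/5040 * k^3 := Real.sq_sqrt hC0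
  calc (Real.sqrt (41/5040 * k^3) * (Real.sqrt X + Real.sqrt Y))^2
      = (41/5040 * k^3) * (Real.sqrt X + Real.sqrt Y)^2 := by
        rw [mul_pow, hCsq]
    _ ≤ (41/5040 * k^3) * (2 * (X + Y)) := by
        exact mul_le_mul_of_nonneg_left hXY hC0
    _ = 41/2520 * k^3 * (X + Y) := by ring
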